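/- Let n ∈ ℕ and κ > 0, and define δ_t by δ_0 = 0, δ_{t+1} = v + P·δ_t, where P is the lazy reflecting walk transition matrix on the path with n vertices and v = (κ, 0, ..., 0, κ)^T. Then there is an absolute constant c₂ > 0 such that δ_{i,t} ≤ c₂·κ·√t for all i and all t ≤ n². -/

import Mathlib

/-! ### Row structure lemmas for the transition matrix -/

section rowsX
variable {α : Type*} [Field α] [LinearOrder α] [IsStrictOrderedRing α] {n : ℕ} (Q : Fin n → Fin n → α)

def QForm (Q : Fin n → Fin n → α) : Prop := ∀ i j : Fin n, Q i j =
      if ((i : ℕ) = 0 ∧ (j : ℕ) = 0) ∨ ((i : ℕ) = n - 1 ∧ (j : ℕ) = n - 1) then (2/3 : α)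
      else if (i : ℕ) ≤ (j : ℕ) + 1 ∧ (j : ℕ) ≤ (i : ℕ) + 1 then (1/3 : α) else 0

variable (hQ : QForm Q)
include hQ

lemma Q_nonneg (i j : Fin n) : 0 ≤ Q i j := by
  rw [hQ]; split_ifs <;> norm_num

lemma Q_far (i j : Fin n) (h : ¬((i:ℕ) ≤ (j:ℕ)+1 ∧ (j:ℕ) ≤ (i:ℕ)+1)) : Q i j = 0 := by
  rw [hQ, if_neg, if_neg h]
  rintro (⟨h1,h2⟩|⟨h1,h2⟩) <;> exact h (by omega)

lemma row_zero (hn : 2 ≤ n) (i : Fin n) (hi : (i:ℕ) = 0) (x : Fin n → α) :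
    ∑ j, Q i j * x j = 2/3 * x i + 1/3 * x ⟨1, by omega⟩ := by
  rw [← Finset.sum_subset (Finset.subset_univ {i, ⟨1, by omega⟩})]
  · rw [Finset.sum_insert (by simp [Fin.ext_iff]; omega), Finset.sum_singleton]
    have e1 : Q i i = 2/3 := by rw [hQ]; simp [hi]
    have e2 : Q i ⟨1, by omega⟩ = 1/3 := by
      rw [hQ, if_neg (by simp [hi]; omega), if_pos (by simp [hi])]
    rw [e1, e2]
  · intro j _ hj
    simp only [Finset.mem_insert, Finset.mem_singleton, ne_eq, Fin.ext_iff, Fin.val_mk] at hj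
    push_neg at hj
    have hj' : (j:ℕ) ≠ (i:ℕ) ∧ (j:ℕ) ≠ 1 := hj
    rw [Q_far Q hQ _ _ (by omega)]
    exact zero_mul _

lemma row_last (hn : 2 ≤ n) (i : Fin n) (hi : (i:ℕ) = n - 1) (x : Fin n → α) :
    ∑ j, Q i j * x j = 1/3 * x ⟨n-2, by omega⟩ + 2/3 * x i := by
  rw [← Finset.sum_subset (Finset.subset_univ {(⟨n-2, by omega⟩ : Fin n), i})]
  · rw [Finset.sum_insert (by simp [Fin.ext_iff]; omega), Finset.sum_singleton]
    have e1 : Q i i = 2/3 := by rw [hQ]; simp [hi]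
    have e2 : Q i ⟨n-2, by omega⟩ = 1/3 := by
      rw [hQ, if_neg (by simp [hi]; omega), if_pos (by simp [hi]; omega)]
    rw [e1, e2]
  · intro j _ hj
    simp only [Finset.mem_insert, Finset.mem_singleton, ne_eq, Fin.ext_iff, Fin.val_mk] at hj
    push_neg at hj
    rw [Q_far Q hQ _ _ (by omega)]
    exact zero_mul _

lemma row_mid (i : Fin n) (h1 : 1 ≤ (i:ℕ)) (h2 : (i:ℕ) + 2 ≤ n) (x : Fin n → α) :
    ∑ j, Q i j * x j
      = 1/3 * x ⟨(i:ℕ)-1, by omega⟩ + 1/3 * x i + 1/3 * x ⟨(i:ℕ)+1, by omega⟩ := by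
  rw [← Finset.sum_subset (Finset.subset_univ {(⟨(i:ℕ)-1, by omega⟩ : Fin n), i, ⟨(i:ℕ)+1, by omega⟩})]
  · rw [Finset.sum_insert (by simp only [Finset.mem_insert, Finset.mem_singleton, Fin.ext_iff, Fin.val_mk]; omega), Finset.sum_insert (by simp only [Finset.mem_singleton, Fin.ext_iff, Fin.val_mk]; omega), Finset.sum_singleton]
    have e1 : Q i ⟨(i:ℕ)-1, by omega⟩ = 1/3 := by
      rw [hQ, if_neg (by simp; omega), if_pos (by simp; omega)]
    have e2 : Q i i = 1/3 := by
      rw [hQ, if_neg (by simp; omega), if_pos (by simp)]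
    have e3 : Q i ⟨(i:ℕ)+1, by omega⟩ = 1/3 := by
      rw [hQ, if_neg (by simp; omega), if_pos (by simp only [Fin.val_mk]; omega)]
    rw [e1, e2, e3, add_assoc]
  · intro j _ hj
    simp only [Finset.mem_insert, Finset.mem_singleton, ne_eq, Fin.ext_iff, Fin.val_mk] at hj
    push_neg at hj
    rw [Q_far Q hQ _ _ (by omega)]
    exact zero_mul _

lemma row_single (hn : n = 1) (i : Fin n) (x : Fin n → α) :
    ∑ j, Q i j * x j = 2/3 * x i := by
  subst hn
  rw [Finset.sum_eq_single i (fun b _ hb => absurd (Subsingleton.elim b i) hb)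
    (fun h => absurd (Finset.mem_univ i) h)]
  have : Q i i = 2/3 := by rw [hQ]; simp [Fin.fin_one_eq_zero i]
  rw [this]

lemma row_const (i : Fin n) (c : α) (hc : 0 ≤ c) : ∑ j, Q i j * c ≤ c := by
  have hn1 : 1 ≤ n := i.pos
  rcases eq_or_lt_of_le hn1 with h1 | h1
  · rw [row_single Q hQ h1.symm i (fun _ => c)]; linarith
  · by_cases h0 : (i:ℕ) = 0
    · rw [row_zero Q hQ (by omega) i h0 (fun _ => c)]; linarith
    · by_cases hl : (i:ℕ) = n - 1
      · rw [row_last Q hQ (by omega) i hl (fun _ => c)]; linarith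
      · have := i.isLt
        rw [row_mid Q hQ i (by omega) (by omega) (fun _ => c)]; linarith

end rowsX

/-! ### The supersolution shape function -/

noncomputable def psi (r x : ℝ) : ℝ := 12 * max (r - x) 0 ^ 2 / r + 24 * r

lemma psi_nonneg {r x : ℝ} (hr : 0 < r) : 0 ≤ psi r x := by
  unfold psi; positivity

lemma psi_le {r x : ℝ} (hr : 0 < r) (hx : 0 ≤ x) : psi r x ≤ 36 * r := by
  have h1 : max (r - x) 0 ≤ r := max_le (by linarith) hr.le
  have h2 : (0:ℝ) ≤ max (r - x) 0 := le_max_right _ _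
  have h3 : 12 * max (r - x) 0 ^ 2 / r ≤ 12 * r := by
    rw [div_le_iff₀ hr]; nlinarith
  unfold psi; linarith

lemma psi_mono_gain {r r' x : ℝ} (hr : 1 ≤ r) (hrr : r ≤ r') (hx : 0 ≤ x) :
    psi r x + 24 * (r' - r) ≤ psi r' x := by
  have hr0 : (0:ℝ) < r := by linarith
  have hr'0 : (0:ℝ) < r' := by linarith
  rcases le_or_gt x r with h | h
  · have m1 : max (r - x) 0 = r - x := max_eq_left (by linarith)
    have m2 : max (r' - x) 0 = r' - x := max_eq_left (by linarith)
    have key : (r - x)^2 / r ≤ (r' - x)^2 / r' := by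
      rw [div_le_div_iff₀ hr0 hr'0]
      nlinarith [mul_nonneg (sub_nonneg.2 hrr) (sub_nonneg.2 (by nlinarith : x^2 ≤ r * r'))]
    have key' : 12 * ((r - x)^2 / r) ≤ 12 * ((r' - x)^2 / r') := by linarith
    have e : psi r' x - (psi r x + 24 * (r' - r))
        = 12 * ((r' - x)^2 / r') - 12 * ((r - x)^2 / r) := by
      unfold psi; rw [m1, m2]; ring
    linarith
  · have m1 : max (r - x) 0 = 0 := max_eq_right (by linarith)
    have h4 : (0:ℝ) ≤ 12 * max (r' - x) 0 ^ 2 / r' := by positivity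
    have e : psi r x = 24 * r := by unfold psi; rw [m1]; ring
    have e2 : psi r' x = 12 * max (r' - x) 0 ^ 2 / r' + 24 * r' := rfl
    linarith

lemma psi_gain {r x : ℝ} (hr : 1 ≤ r) (hx : 0 ≤ x) :
    psi r x + 8 / r ≤ psi (Real.sqrt (r^2 + 1)) x := by
  set r' := Real.sqrt (r^2 + 1) with hr'
  have h1 : r'^2 = r^2 + 1 := Real.sq_sqrt (by positivity)
  have h2 : r ≤ r' := by
    rw [← Real.sqrt_sq (by linarith : (0:ℝ) ≤ r)]
    exact Real.sqrt_le_sqrt (by nlinarith)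
  have h3 : r' ≤ 2 * r := by
    nlinarith [h1, sq_nonneg (r' - 2*r), sq_nonneg r']
  have h4 : (r' - r) * (r' + r) = 1 := by nlinarith
  have h5 : 8 / r ≤ 24 * (r' - r) := by
    rw [div_le_iff₀ (by linarith : (0:ℝ) < r)]
    nlinarith
  have := psi_mono_gain hr h2 hx
  linarith

lemma psi_secdiff {r x : ℝ} (hr : 1 ≤ r) (hx : 1 ≤ x) :
    psi r (x - 1) + psi r (x + 1) ≤ 2 * psi r x + 24 / r := by
  have hr0 : (0:ℝ) < r := by linarith
  have key : max (r - (x-1)) 0 ^ 2 + max (r - (x+1)) 0 ^ 2 ≤ 2 * max (r - x) 0 ^ 2 + 2 := by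
    rcases le_or_gt r (x - 1) with h1 | h1
    · rw [max_eq_right (by linarith), max_eq_right (by linarith), max_eq_right (by linarith)]
      norm_num
    · rcases le_or_gt r x with h2 | h2
      · rw [max_eq_left (by linarith), max_eq_right (by linarith), max_eq_right (by linarith)]
        nlinarith
      · rcases le_or_gt r (x + 1) with h3 | h3
        · rw [max_eq_left (by linarith), max_eq_right (by linarith), max_eq_left (by linarith)]
          nlinarith
        · rw [max_eq_left (by linarith), max_eq_left (by linarith), max_eq_left (by linarith)]
          nlinarith
  rw [← sub_nonneg]
  have e : 2 * psi r x + 24 / r - (psi r (x - 1) + psi r (x + 1))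
      = (2 * max (r - x) 0 ^ 2 + 2 - max (r - (x-1)) 0 ^ 2 - max (r - (x+1)) 0 ^ 2) * 12 / r := by
    unfold psi; ring
  rw [e]
  apply div_nonneg _ hr0.le
  nlinarith

lemma psi_drop {r : ℝ} (hr : 1 ≤ r) : psi r 1 ≤ psi r 0 - 24 + 12 / r := by
  have hr0 : (0:ℝ) < r := by linarith
  have : psi r 1 = psi r 0 - 24 + 12 / r := by
    unfold psi
    rw [max_eq_left (by linarith), max_eq_left (by linarith)]
    field_simp
    ring
  linarith

lemma psi_tail {r y : ℝ} (hy : 9 ≤ y) (hry : r ≤ y + 2) (hr : 1 ≤ r) :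
    psi r y ≤ psi r (y + 1) + 6 := by
  have hr0 : (0:ℝ) < r := by linarith
  rcases le_or_gt r y with h | h
  · have e1 : psi r y = 24 * r := by unfold psi; rw [max_eq_right (by linarith)]; ring
    have e2 : 0 ≤ 12 * max (r - (y+1)) 0 ^ 2 / r := by positivity
    have e3 : psi r (y+1) = 12 * max (r - (y+1)) 0 ^ 2 / r + 24 * r := rfl
    linarith
  · have m1 : max (r - y) 0 = r - y := max_eq_left (by linarith)
    have h9 : (9:ℝ) ≤ r := by linarith
    have hsq : (r - y)^2 ≤ 4 := by nlinarith
    have A : 12 * (r - y)^2 / r ≤ 6 := by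
      rw [div_le_iff₀ hr0]; nlinarith
    have B : 0 ≤ 12 * max (r - (y+1)) 0 ^ 2 / r := by positivity
    have e1 : psi r y = 12 * (r - y)^2 / r + 24 * r := by unfold psi; rw [m1]
    have e3 : psi r (y+1) = 12 * max (r - (y+1)) 0 ^ 2 / r + 24 * r := rfl
    linarith

lemma super_mid {r N x : ℝ} (hr : 1 ≤ r) (hx : 1 ≤ x) (hxN : x ≤ N - 2) :
    1/3 * (psi r (x-1) + psi r (N-1-(x-1))) + 1/3 * (psi r x + psi r (N-1-x))
      + 1/3 * (psi r (x+1) + psi r (N-1-(x+1)))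
      ≤ psi (Real.sqrt (r^2+1)) x + psi (Real.sqrt (r^2+1)) (N-1-x) := by
  have hy : 1 ≤ N-1-x := by linarith
  have s1 := psi_secdiff hr hx
  have s2 := psi_secdiff hr hy
  have g1 := psi_gain hr (by linarith : (0:ℝ) ≤ x)
  have g2 := psi_gain hr (by linarith : (0:ℝ) ≤ N-1-x)
  have e1 : N-1-(x-1) = (N-1-x)+1 := by ring
  have e2 : N-1-(x+1) = (N-1-x)-1 := by ring
  rw [e1, e2]
  have hid : 24 / r = 3 * (8 / r) := by ring
  linarith

lemma super_bdry {r N : ℝ} (hr : 1 ≤ r) (hN : 11 ≤ N) (hrN : r ≤ N) :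
    1 + 2/3 * (psi r 0 + psi r (N-1-0)) + 1/3 * (psi r 1 + psi r (N-1-1))
      ≤ psi (Real.sqrt (r^2+1)) 0 + psi (Real.sqrt (r^2+1)) (N-1-0) := by
  have e1 : N-1-(0:ℝ) = N-1 := by ring
  have e2 : N-1-(1:ℝ) = N-2 := by ring
  rw [e1, e2]
  have tail := psi_tail (show (9:ℝ) ≤ N-2 by linarith) (show r ≤ (N-2)+2 by linarith) hr
  have e3 : (N-2)+(1:ℝ) = N-1 := by ring
  rw [e3] at tail
  have drop := psi_drop hr
  have g1 := psi_gain hr (le_refl (0:ℝ))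
  have g2 := psi_gain hr (show (0:ℝ) ≤ N-1 by linarith)
  have hr0 : (0:ℝ) < r := by linarith
  have hrr : 12 / r ≤ 12 := by rw [div_le_iff₀ hr0]; nlinarith
  have h8 : 0 ≤ 8 / r := by positivity
  linarith

/-! ### Main theorem -/


/-- Lemma 2.2 of the paper: with `δ_0 = 0` and `δ_{t+1} = v + P·δ_t`, where `P`
is the lazy reflecting walk transition matrix on the path with `n` vertices and
`v = (κ, 0, …, 0, κ)ᵀ`, there is an absolute constant `c₂ > 0` such that
`δ_{i,t} ≤ c₂·κ·√t` for all `i` and all `t ≤ n²`. -/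
theorem stmt_14 : ∃ c₂ : ℝ, 0 < c₂ ∧
    ∀ (n : ℕ) (κ : ℚ), 0 < κ →
    ∀ (P : Matrix (Fin n) (Fin n) ℚ),
    (∀ i j : Fin n, P i j =
      if ((i : ℕ) = 0 ∧ (j : ℕ) = 0) ∨ ((i : ℕ) = n - 1 ∧ (j : ℕ) = n - 1) then (2/3 : ℚ)
      else if (i : ℕ) ≤ (j : ℕ) + 1 ∧ (j : ℕ) ≤ (i : ℕ) + 1 then (1/3 : ℚ) else 0) →
    ∀ (v : Fin n → ℚ),
    (∀ i : Fin n, v i = if (i : ℕ) = 0 ∨ (i : ℕ) = n - 1 then κ else 0) →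
    ∀ (δ : ℕ → Fin n → ℚ), δ 0 = 0 → (∀ t, δ (t + 1) = v + P.mulVec (δ t)) →
    ∀ (t : ℕ), t ≤ n ^ 2 → ∀ i : Fin n,
      (δ t i : ℝ) ≤ c₂ * (κ : ℝ) * Real.sqrt t := by
  refine ⟨200, by norm_num, ?_⟩
  intro n κ hκ P hP v hv δ hδ0 hδs t ht i
  have hκR : (0:ℝ) < (κ:ℝ) := by exact_mod_cast hκ
  have hQP : QForm P := hP
  have hQR : QForm (fun i j => ((P i j : ℚ) : ℝ)) := by
    intro i j
    show ((P i j : ℚ) : ℝ) = _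
    rw [hP i j]
    split_ifs <;> norm_num
  have hDs : ∀ t (i : Fin n), ((δ (t+1) i : ℚ) : ℝ)
      = ((v i : ℚ) : ℝ) + ∑ j, ((P i j : ℚ) : ℝ) * ((δ t j : ℚ) : ℝ) := by
    intro t i
    rw [hδs t]
    show (((v i + ∑ j, P i j * δ t j : ℚ)) : ℝ) = _
    push_cast
    ring
  -- nonnegativity
  have hnn : ∀ t (i : Fin n), 0 ≤ δ t i := by
    intro t
    induction t with
    | zero => intro i; rw [hδ0]; exact le_rfl
    | succ t IH =>
      intro i
      rw [hδs t]
      show 0 ≤ v i + ∑ j, P i j * δ t j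
      have h1 : 0 ≤ v i := by rw [hv i]; split_ifs <;> positivity
      have h2 : 0 ≤ ∑ j, P i j * δ t j :=
        Finset.sum_nonneg fun j _ => mul_nonneg (Q_nonneg P hQP i j) (IH j)
      linarith
  -- trivial linear bound
  have htriv : ∀ t (i : Fin n), δ t i ≤ κ * t := by
    intro t
    induction t with
    | zero => intro i; rw [hδ0]; norm_num
    | succ t IH =>
      intro i
      rw [hδs t]
      show v i + ∑ j, P i j * δ t j ≤ _
      have h1 : v i ≤ κ := by rw [hv i]; split_ifs <;> linarith
      have h2 : ∑ j, P i j * δ t j ≤ ∑ j, P i j * (κ * t) :=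
        Finset.sum_le_sum fun j _ =>
          mul_le_mul_of_nonneg_left (IH j) (Q_nonneg P hQP i j)
      have h3 : ∑ j, P i j * (κ * t) ≤ κ * t :=
        row_const P hQP i (κ * t) (by positivity)
      push_cast
      linarith
  rcases le_or_gt n 10 with hn | hn
  · -- small n : use the trivial bound
    have h1 : ((δ t i : ℚ) : ℝ) ≤ (κ:ℝ) * t := by exact_mod_cast htriv t i
    have ht' : (t:ℝ) ≤ 100 := by
      have : t ≤ 100 := le_trans ht (by nlinarith)
      exact_mod_cast this
    have hsq : Real.sqrt t * Real.sqrt t = (t:ℝ) := Real.mul_self_sqrt (by positivity)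
    have h10 : Real.sqrt t ≤ 10 := by
      nlinarith [Real.sqrt_nonneg t]
    have h2 : (t:ℝ) ≤ 10 * Real.sqrt t := by nlinarith [Real.sqrt_nonneg t]
    nlinarith [Real.sqrt_nonneg t]
  · -- large n : supersolution argument
    have hn11 : 11 ≤ n := hn
    obtain ⟨N, hNdef⟩ : ∃ x : ℝ, x = (n:ℝ) := ⟨_, rfl⟩
    have hN : (11:ℝ) ≤ N := by rw [hNdef]; exact_mod_cast hn11
    have hr1 : ∀ s:ℕ, 1 ≤ Real.sqrt (s+1) := by
      intro s
      have h := Real.sqrt_le_sqrt (show (1:ℝ) ≤ (s:ℝ)+1 by linarith [Nat.cast_nonneg (α := ℝ) s])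
      rwa [Real.sqrt_one] at h
    have hr0 : ∀ s:ℕ, (0:ℝ) < Real.sqrt (s+1) := fun s => lt_of_lt_of_le one_pos (hr1 s)
    have hrsq : ∀ s:ℕ, (Real.sqrt (s+1))^2 = (s:ℝ)+1 := fun s => Real.sq_sqrt (by positivity)
    have hrsucc : ∀ s:ℕ, Real.sqrt ((s+1:ℕ)+1) = Real.sqrt ((Real.sqrt (s+1))^2 + 1) := by
      intro s
      rw [hrsq]
      congr 1
      push_cast
      ring
    obtain ⟨Φ, hΦ⟩ : ∃ f : ℕ → ℝ → ℝ, ∀ (s : ℕ) (x : ℝ),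
        f s x = psi (Real.sqrt (s+1)) x + psi (Real.sqrt (s+1)) (N-1-x) :=
      ⟨_, fun _ _ => rfl⟩
    have hΦnn : ∀ s x, 0 ≤ Φ s x := fun s x => by
      rw [hΦ]
      exact add_nonneg (psi_nonneg (hr0 s)) (psi_nonneg (hr0 s))
    have key : ∀ s, s ≤ n^2 → ∀ j : Fin n, ((δ s j : ℚ) : ℝ) ≤ (κ:ℝ) * Φ s ((j:ℕ):ℝ) := by
      intro s
      induction s with
      | zero =>
        intro _ j
        rw [hδ0]
        show ((0:ℚ):ℝ) ≤ _
        rw [Rat.cast_zero]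
        exact mul_nonneg hκR.le (hΦnn 0 _)
      | succ s IH =>
        intro hs j
        have hs' : s ≤ n^2 := le_trans (Nat.le_succ s) hs
        have IH' := IH hs'
        have hrn : Real.sqrt (s+1) ≤ N := by
          rw [show N = Real.sqrt (N^2) by rw [Real.sqrt_sq (by positivity)]]
          apply Real.sqrt_le_sqrt
          rw [hNdef]
          push_cast
          have : (s:ℝ) + 1 ≤ ((n:ℝ))^2 := by
            have : ((s+1:ℕ):ℝ) ≤ ((n^2:ℕ):ℝ) := by exact_mod_cast hs
            push_cast at this
            linarith
          linarith
        by_cases h0 : (j:ℕ) = 0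
        · -- left boundary
          rw [hDs s j, row_zero _ hQR (by omega) j h0 (fun k => ((δ s k : ℚ) : ℝ))]
          have hv0 : ((v j : ℚ) : ℝ) = (κ:ℝ) := by rw [hv j, if_pos (Or.inl h0)]
          have I0 := IH' j
          rw [h0] at I0
          have I1 := IH' ⟨1, by omega⟩
          have e1 : (((⟨1, by omega⟩ : Fin n) : ℕ) : ℝ) = 1 := by norm_num
          rw [e1] at I1
          have bdry : 1 + 2/3 * Φ s 0 + 1/3 * Φ s 1 ≤ Φ (s+1) 0 := by
            rw [hΦ s 0, hΦ s 1, hΦ (s+1) 0, hrsucc s]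
            exact super_bdry (hr1 s) hN hrn
          have bdry' := mul_le_mul_of_nonneg_left bdry hκR.le
          have e0 : (((0:ℕ)):ℝ) = 0 := by norm_num
          rw [hv0, h0, e0]
          rw [e0] at I0
          linarith
        · by_cases hl : (j:ℕ) = n - 1
          · -- right boundary
            rw [hDs s j, row_last _ hQR (by omega) j hl (fun k => ((δ s k : ℚ) : ℝ))]
            have hv0 : ((v j : ℚ) : ℝ) = (κ:ℝ) := by rw [hv j, if_pos (Or.inr hl)]
            have I0 := IH' j
            rw [hl] at I0
            have I1 := IH' ⟨n-2, by omega⟩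
            have e1 : (((⟨n-2, by omega⟩ : Fin n) : ℕ) : ℝ) = N - 2 := by
              show ((n-2:ℕ):ℝ) = N - 2
              rw [hNdef]
              push_cast [Nat.cast_sub (by omega : 2 ≤ n)]
              ring
            rw [e1] at I1
            have e0 : (((n-1:ℕ)):ℝ) = N - 1 := by
              rw [hNdef]
              push_cast [Nat.cast_sub (by omega : 1 ≤ n)]
              ring
            have sym1 : ∀ u : ℕ, Φ u (N-1) = Φ u 0 := by
              intro u
              rw [hΦ u (N-1), hΦ u 0]
              rw [show N-1-(N-1) = (0:ℝ) by ring, show N-1-(0:ℝ) = N-1 by ring]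
              ring
            have sym2 : ∀ u : ℕ, Φ u (N-2) = Φ u 1 := by
              intro u
              rw [hΦ u (N-2), hΦ u 1]
              rw [show N-1-(N-2) = (1:ℝ) by ring, show N-1-(1:ℝ) = N-2 by ring]
              ring
            have bdry : 1 + 2/3 * Φ s 0 + 1/3 * Φ s 1 ≤ Φ (s+1) 0 := by
              rw [hΦ s 0, hΦ s 1, hΦ (s+1) 0, hrsucc s]
              exact super_bdry (hr1 s) hN hrn
            have bdry' := mul_le_mul_of_nonneg_left bdry hκR.le
            rw [hv0, hl, e0]
            rw [e0, sym1 s] at I0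
            rw [sym2 s] at I1
            rw [sym1 (s+1)]
            linarith
          · -- interior
            have hj1 : 1 ≤ (j:ℕ) := by omega
            have hj2 : (j:ℕ) + 2 ≤ n := by have := j.isLt; omega
            rw [hDs s j, row_mid _ hQR j hj1 hj2 (fun k => ((δ s k : ℚ) : ℝ))]
            have hv0 : ((v j : ℚ) : ℝ) = 0 := by
              rw [hv j, if_neg (by push_neg; exact ⟨h0, hl⟩)]
              norm_num
            obtain ⟨x, hx⟩ : ∃ y : ℝ, y = ((j:ℕ):ℝ) := ⟨_, rfl⟩
            have hx1 : 1 ≤ x := by rw [hx]; exact_mod_cast hj1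
            have hxN : x ≤ N - 2 := by
              rw [hx, hNdef]
              have : ((j:ℕ):ℝ) + 2 ≤ (n:ℝ) := by exact_mod_cast hj2
              linarith
            have Im := IH' ⟨(j:ℕ)-1, by omega⟩
            have em : (((⟨(j:ℕ)-1, by omega⟩ : Fin n) : ℕ) : ℝ) = x - 1 := by
              show (((j:ℕ)-1:ℕ):ℝ) = x - 1
              push_cast [Nat.cast_sub hj1]
              rw [hx]
            rw [em] at Im
            have I0 := IH' j
            have Ip := IH' ⟨(j:ℕ)+1, by omega⟩
            have ep : (((⟨(j:ℕ)+1, by omega⟩ : Fin n) : ℕ) : ℝ) = x + 1 := by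
              show (((j:ℕ)+1:ℕ):ℝ) = x + 1
              push_cast
              rw [hx]
            rw [ep] at Ip
            have mid : 1/3 * Φ s (x-1) + 1/3 * Φ s x + 1/3 * Φ s (x+1) ≤ Φ (s+1) x := by
              rw [hΦ s (x-1), hΦ s x, hΦ s (x+1), hΦ (s+1) x, hrsucc s]
              exact super_mid (hr1 s) hx1 hxN
            have mid' := mul_le_mul_of_nonneg_left mid hκR.le
            rw [← hx] at I0
            rw [hv0, ← hx]
            linarith
    -- conclude
    rcases Nat.eq_zero_or_pos t with rfl | htpos
    · rw [hδ0]
      show ((0:ℚ):ℝ) ≤ _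
      rw [Rat.cast_zero]
      have : Real.sqrt 0 = 0 := Real.sqrt_zero
      push_cast
      rw [this]
      ring_nf
      exact le_rfl
    · have hk := key t ht i
      have hb1 : Φ t ((i:ℕ):ℝ) ≤ 72 * Real.sqrt (t+1) := by
        rw [hΦ]
        have p1 : psi (Real.sqrt (t+1)) ((i:ℕ):ℝ) ≤ 36 * Real.sqrt (t+1) :=
          psi_le (hr0 t) (by positivity)
        have p2 : psi (Real.sqrt (t+1)) (N-1-((i:ℕ):ℝ)) ≤ 36 * Real.sqrt (t+1) := by
          apply psi_le (hr0 t)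
          have : ((i:ℕ):ℝ) ≤ N - 1 := by
            rw [hNdef]
            have := i.isLt
            have : ((i:ℕ):ℝ) + 1 ≤ (n:ℝ) := by exact_mod_cast this
            linarith
          linarith
        linarith
      have hb2 : Real.sqrt ((t:ℝ)+1) ≤ Real.sqrt 2 * Real.sqrt t := by
        rw [← Real.sqrt_mul (by norm_num : (0:ℝ) ≤ 2)]
        apply Real.sqrt_le_sqrt
        have : (1:ℝ) ≤ (t:ℝ) := by exact_mod_cast htpos
        linarith
      have hb3 : Real.sqrt 2 ≤ 1.5 := by
        have h := Real.sqrt_le_sqrt (show (2:ℝ) ≤ 2.25 by norm_num)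
        rw [show (2.25:ℝ) = 1.5^2 by norm_num, Real.sqrt_sq (by norm_num)] at h
        exact h
      have hb4 : Φ t ((i:ℕ):ℝ) ≤ 108 * Real.sqrt t := by
        have := mul_le_mul_of_nonneg_right hb3 (Real.sqrt_nonneg t)
        nlinarith [Real.sqrt_nonneg t, Real.sqrt_nonneg 2]
      have := mul_le_mul_of_nonneg_left hb4 hκR.le
      nlinarith [mul_nonneg hκR.le (Real.sqrt_nonneg t)]
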